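/- Let z > 1 be an integer, let Q be the z×z grid graph, and let U be its top row. Then for every partition (X',Y') of U into two disjoint subsets, there exists a set of min(|X'|,|Y'|) pairwise vertex-disjoint paths in Q, each connecting a vertex of X' to a vertex of Y', with all these endpoints distinct. -/

import Mathlib

/-- The `z × z` grid graph: vertices `(i,j)` with `0 ≤ i,j < z` (0-indexed), and an edge
between `(i,j)` and `(i',j')` iff `|i-i'| + |j-j'| = 1`. -/
def gridGraph (z : ℕ) : SimpleGraph (Fin z × Fin z) where
  Adj a b := ((a.1 : ℤ) - (b.1 : ℤ)).natAbs + ((a.2 : ℤ) - (b.2 : ℤ)).natAbs = 1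
  symm := ⟨by intro a b h; omega⟩
  loopless := ⟨by intro a h; simp at h⟩

lemma grid_adj {z : ℕ} (u v : Fin z × Fin z)
    (h : ((u.1 : ℤ) - (v.1 : ℤ)).natAbs + ((u.2 : ℤ) - (v.2 : ℤ)).natAbs = 1) :
    (gridGraph z).Adj u v := h

lemma isPath_concat {z : ℕ} {u v w : Fin z × Fin z} (p : (gridGraph z).Walk u v)
    (h : (gridGraph z).Adj v w) (hp : p.IsPath) (hw : w ∉ p.support) :
    (p.concat h).IsPath := by
  rw [SimpleGraph.Walk.isPath_def, SimpleGraph.Walk.support_concat,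
    List.nodup_append]
  exact ⟨hp.support_nodup, List.nodup_singleton _,
    fun a ha b hb hab => hw (by rw [List.mem_singleton] at hb; rw [← hb, ← hab]; exact ha)⟩

lemma horiz_walk_le {z : ℕ} (r : Fin z) : ∀ (d : ℕ) (a b : Fin z), (a:ℕ) + d = b →
    ∃ p : (gridGraph z).Walk (r, a) (r, b), p.IsPath ∧
      ∀ v ∈ p.support, v.1 = r ∧ (a:ℕ) ≤ v.2 ∧ (v.2:ℕ) ≤ b := by
  intro d
  induction d with
  | zero =>
    intro a b h
    have hab : a = b := Fin.ext (by omega)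
    subst hab
    exact ⟨SimpleGraph.Walk.nil, by simp, by simp⟩
  | succ n ih =>
    intro a b h
    have ha1 : (a:ℕ) + 1 < z := by have := b.isLt; omega
    obtain ⟨p, hp, hsupp⟩ := ih ⟨a + 1, ha1⟩ b (by simpa using by omega)
    have hadj : (gridGraph z).Adj (r, a) (r, (⟨a + 1, ha1⟩ : Fin z)) := by
      apply grid_adj
      show ((r:ℤ) - (r:ℤ)).natAbs + ((a:ℤ) - ((⟨(a:ℕ) + 1, ha1⟩ : Fin z) : ℤ)).natAbs = 1
      simp only [Fin.val_mk]
      omega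
    refine ⟨SimpleGraph.Walk.cons hadj p, ?_, ?_⟩
    · rw [SimpleGraph.Walk.cons_isPath_iff]
      refine ⟨hp, fun hc => ?_⟩
      have h2 := (hsupp _ hc).2.1
      simp only [Fin.val_mk] at h2
      have h3 : ((r, a).2 : ℕ) = (a : ℕ) := rfl
      omega
    · intro v hv
      rw [SimpleGraph.Walk.support_cons, List.mem_cons] at hv
      rcases hv with rfl | hv
      · have h3 : ((r, a).2 : ℕ) = (a : ℕ) := rfl
        exact ⟨rfl, by omega, by omega⟩
      · obtain ⟨h1, h2, h3⟩ := hsupp v hv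
        simp only [Fin.val_mk] at h2
        exact ⟨h1, by omega, h3⟩

lemma horiz_walk {z : ℕ} (r a b : Fin z) :
    ∃ p : (gridGraph z).Walk (r, a) (r, b), p.IsPath ∧
      ∀ v ∈ p.support, v.1 = r ∧ min (a:ℕ) (b:ℕ) ≤ v.2 ∧ (v.2:ℕ) ≤ max (a:ℕ) (b:ℕ) := by
  rcases le_total (a:ℕ) (b:ℕ) with hle | hle
  · obtain ⟨p, hp, hs⟩ := horiz_walk_le r ((b:ℕ) - a) a b (by omega)
    exact ⟨p, hp, fun v hv => ⟨(hs v hv).1, by have := hs v hv; omega⟩⟩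
  · obtain ⟨p, hp, hs⟩ := horiz_walk_le r ((a:ℕ) - b) b a (by omega)
    refine ⟨p.reverse, hp.reverse, fun v hv => ?_⟩
    rw [SimpleGraph.Walk.support_reverse, List.mem_reverse] at hv
    have := hs v hv; exact ⟨this.1, by omega, by omega⟩

lemma key (z : ℕ) : ∀ (m : ℕ) (r : ℕ) (X Y : Finset (Fin z)),
    r + m ≤ z → Disjoint X Y → m ≤ X.card → m ≤ Y.card →
    ∃ (s t : Fin m → Fin z × Fin z) (p : ∀ i, (gridGraph z).Walk (s i) (t i)),
      (∀ i, ((s i).1 : ℕ) = r ∧ (s i).2 ∈ X) ∧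
      (∀ i, ((t i).1 : ℕ) = r ∧ (t i).2 ∈ Y) ∧
      (∀ i, (p i).IsPath) ∧
      (∀ i j, i ≠ j → ∀ v ∈ (p i).support, v ∉ (p j).support) ∧
      (∀ i, ∀ v ∈ (p i).support, r ≤ (v.1 : ℕ)) := by
  intro m
  induction m with
  | zero =>
    intro r X Y _ _ _ _
    exact ⟨Fin.elim0, Fin.elim0, fun i => i.elim0, fun i => i.elim0, fun i => i.elim0,
      fun i => i.elim0, fun i j h => i.elim0, fun i => i.elim0⟩
  | succ m ih =>
    intro r X Y hr hdisj hX hY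
    have hrz : r < z := by omega
    set rf : Fin z := ⟨r, hrz⟩ with hrf
    have hrfv : (rf : ℕ) = r := rfl
    have hXne : X.Nonempty := Finset.card_pos.mp (by omega)
    have hYne : Y.Nonempty := Finset.card_pos.mp (by omega)
    obtain ⟨cc, hcc, hmin⟩ := Finset.exists_min_image (X ×ˢ Y)
      (fun q => ((q.1 : ℤ) - (q.2 : ℤ)).natAbs) (hXne.product hYne)
    obtain ⟨c, c'⟩ := cc
    rw [Finset.mem_product] at hcc
    have hcX : c ∈ X := hcc.1
    have hc'Y : c' ∈ Y := hcc.2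
    -- innermost property
    have hinner : ∀ e : Fin z, e ∈ X ∪ Y → e ≠ c → e ≠ c' →
        (e:ℕ) < min (c:ℕ) (c':ℕ) ∨ max (c:ℕ) (c':ℕ) < (e:ℕ) := by
      intro e he hec hec'
      by_contra hcon
      push_neg at hcon
      have hec2 : (e:ℕ) ≠ (c:ℕ) := fun h => hec (Fin.ext h)
      have hec'2 : (e:ℕ) ≠ (c':ℕ) := fun h => hec' (Fin.ext h)
      rcases Finset.mem_union.mp he with heX | heY
      · have hm := hmin (e, c') (Finset.mem_product.mpr ⟨heX, hc'Y⟩)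
        simp only at hm
        omega
      · have hm := hmin (c, e) (Finset.mem_product.mpr ⟨hcX, heY⟩)
        simp only at hm
        omega
    obtain ⟨p₀, hp₀, hsupp₀⟩ := horiz_walk rf c c'
    obtain ⟨s', t', q, hs', ht', hqpath, hqdisj, hqrow⟩ :=
      ih (r+1) (X.erase c) (Y.erase c') (by omega)
        (hdisj.mono (Finset.erase_subset _ _) (Finset.erase_subset _ _))
        (by rw [Finset.card_erase_of_mem hcX]; omega)
        (by rw [Finset.card_erase_of_mem hc'Y]; omega)
    -- facts about the recursive paths
    have hsX : ∀ i, (s' i).2 ∈ X := fun i => Finset.mem_of_mem_erase (hs' i).2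
    have htY : ∀ i, (t' i).2 ∈ Y := fun i => Finset.mem_of_mem_erase (ht' i).2
    have hsc : ∀ i, (s' i).2 ≠ c := fun i => (Finset.mem_erase.mp (hs' i).2).1
    have htc' : ∀ i, (t' i).2 ≠ c' := fun i => (Finset.mem_erase.mp (ht' i).2).1
    have hsc' : ∀ i, (s' i).2 ≠ c' := fun i h =>
      Finset.disjoint_left.mp hdisj (hsX i) (h ▸ hc'Y)
    have htc : ∀ i, (t' i).2 ≠ c := fun i h =>
      Finset.disjoint_left.mp hdisj (h ▸ hcX) (htY i)
    have hST : ∀ i j, (s' i).2 ≠ (t' j).2 := fun i j h =>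
      Finset.disjoint_left.mp hdisj (hsX i) (h ▸ htY j)
    -- outside the interval
    have hsOut : ∀ i, ((s' i).2 : ℕ) < min (c:ℕ) (c':ℕ) ∨ max (c:ℕ) (c':ℕ) < ((s' i).2:ℕ) :=
      fun i => hinner _ (Finset.mem_union_left _ (hsX i)) (hsc i) (hsc' i)
    have htOut : ∀ i, ((t' i).2 : ℕ) < min (c:ℕ) (c':ℕ) ∨ max (c:ℕ) (c':ℕ) < ((t' i).2:ℕ) :=
      fun i => hinner _ (Finset.mem_union_right _ (htY i)) (htc i) (htc' i)
    -- lifted vertices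
    have hadjS : ∀ i, (gridGraph z).Adj (rf, (s' i).2) (s' i) := by
      intro i
      apply grid_adj
      have h1 := (hs' i).1
      show ((rf:ℤ) - ((s' i).1:ℤ)).natAbs + (((s' i).2:ℤ) - ((s' i).2:ℤ)).natAbs = 1
      omega
    have hadjT : ∀ i, (gridGraph z).Adj (t' i) (rf, (t' i).2) := by
      intro i
      apply grid_adj
      have h1 := (ht' i).1
      show (((t' i).1:ℤ) - (rf:ℤ)).natAbs + (((t' i).2:ℤ) - ((t' i).2:ℤ)).natAbs = 1
      omega
    -- lifted walks
    have hrowAny : ∀ (j : Fin m) (col : Fin z), ((rf, col) : Fin z × Fin z) ∉ (q j).support := by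
      intro j col hmem
      have h1 := hqrow j _ hmem
      have h2 : (((rf, col) : Fin z × Fin z).1 : ℕ) = r := rfl
      omega
    have hrowS : ∀ i, ((rf, (s' i).2) : Fin z × Fin z) ∉ (q i).support := fun i => hrowAny i _
    have hrowT : ∀ i, ((rf, (t' i).2) : Fin z × Fin z) ∉ (q i).support := fun i => hrowAny i _
    have hSTv : ∀ i j, ((rf, (s' i).2) : Fin z × Fin z) ≠ (rf, (t' j).2) := by
      intro i j h
      exact hST i j (Prod.ext_iff.mp h).2
    set lifted : ∀ i : Fin m, (gridGraph z).Walk (rf, (s' i).2) (rf, (t' i).2) :=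
      fun i => SimpleGraph.Walk.cons (hadjS i) ((q i).concat (hadjT i)) with hlifted
    have hliftedSupp : ∀ i v, v ∈ (lifted i).support ↔
        v = (rf, (s' i).2) ∨ v ∈ (q i).support ∨ v = (rf, (t' i).2) := by
      intro i v
      simp [hlifted, SimpleGraph.Walk.support_cons, SimpleGraph.Walk.support_concat,
        List.concat_eq_append, or_assoc]
    have hliftedPath : ∀ i, (lifted i).IsPath := by
      intro i
      rw [SimpleGraph.Walk.cons_isPath_iff]
      constructor
      · exact isPath_concat _ _ (hqpath i) (hrowT i)
      · rw [SimpleGraph.Walk.support_concat, List.mem_append]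
        rintro (h | h)
        · exact hrowS i h
        · simp only [List.mem_singleton] at h
          exact hSTv i i h
    -- membership of endpoints in recursive supports
    have hs'mem : ∀ i, s' i ∈ (q i).support := fun i => SimpleGraph.Walk.start_mem_support _
    have ht'mem : ∀ i, t' i ∈ (q i).support := fun i => SimpleGraph.Walk.end_mem_support _
    -- s' and t' are determined by columns (rows are all r+1)
    have hvert : ∀ (u w : Fin z × Fin z), ((u.1:ℕ) = r+1) → ((w.1:ℕ) = r+1) → u.2 = w.2 → u = w := by
      intro u w hu hw h2
      exact Prod.ext (Fin.ext (by omega)) h2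
    -- column distinctness across different recursive paths
    have hScol : ∀ i j, i ≠ j → (s' i).2 ≠ (s' j).2 := by
      intro i j hij h
      have heq : s' i = s' j := hvert _ _ (hs' i).1 (hs' j).1 h
      apply hqdisj i j hij (s' i) (hs'mem i)
      rw [heq]; exact hs'mem j
    have hTcol : ∀ i j, i ≠ j → (t' i).2 ≠ (t' j).2 := by
      intro i j hij h
      have heq : t' i = t' j := hvert _ _ (ht' i).1 (ht' j).1 h
      apply hqdisj i j hij (t' i) (ht'mem i)
      rw [heq]; exact ht'mem j
    -- disjointness between p₀ and lifted paths
    have hdisj0 : ∀ i v, v ∈ p₀.support → v ∈ (lifted i).support → False := by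
      intro i v h0 hl
      obtain ⟨hv1, hv2, hv3⟩ := hsupp₀ v h0
      rw [hliftedSupp] at hl
      rcases hl with rfl | hl | rfl
      · have := hsOut i
        simp only at hv2 hv3
        omega
      · have := hqrow i v hl
        rw [hv1, hrfv] at this
        omega
      · have := htOut i
        simp only at hv2 hv3
        omega
    -- assemble
    have hconsS0 : (Fin.cons (rf, c) (fun i => (rf, (s' i).2)) : Fin (m+1) → Fin z × Fin z) 0
        = (rf, c) := Fin.cons_zero _ _
    have hconsT0 : (Fin.cons (rf, c') (fun i => (rf, (t' i).2)) : Fin (m+1) → Fin z × Fin z) 0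
        = (rf, c') := Fin.cons_zero _ _
    have hconsS : ∀ j : Fin m,
        (Fin.cons (rf, c) (fun i => (rf, (s' i).2)) : Fin (m+1) → Fin z × Fin z) j.succ
        = (rf, (s' j).2) := fun j => Fin.cons_succ _ _ _
    have hconsT : ∀ j : Fin m,
        (Fin.cons (rf, c') (fun i => (rf, (t' i).2)) : Fin (m+1) → Fin z × Fin z) j.succ
        = (rf, (t' j).2) := fun j => Fin.cons_succ _ _ _
    refine ⟨Fin.cons (rf, c) (fun i => (rf, (s' i).2)),
            Fin.cons (rf, c') (fun i => (rf, (t' i).2)),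
            fun i => Fin.cases (p₀.copy hconsS0.symm hconsT0.symm)
              (fun j => (lifted j).copy (hconsS j).symm (hconsT j).symm) i,
            ?_, ?_, ?_, ?_, ?_⟩
    · intro i
      induction i using Fin.cases with
      | zero => rw [hconsS0]; exact ⟨hrfv, hcX⟩
      | succ j => rw [hconsS j]; exact ⟨hrfv, hsX j⟩
    · intro i
      induction i using Fin.cases with
      | zero => rw [hconsT0]; exact ⟨hrfv, hc'Y⟩
      | succ j => rw [hconsT j]; exact ⟨hrfv, htY j⟩
    · intro i
      induction i using Fin.cases with
      | zero => simpa using hp₀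
      | succ j => simpa using hliftedPath j
    · intro i j hij v hvi hvj
      induction i using Fin.cases with
      | zero =>
        induction j using Fin.cases with
        | zero => exact hij rfl
        | succ j' =>
          simp only [Fin.cases_zero, Fin.cases_succ, SimpleGraph.Walk.support_copy] at hvi hvj
          exact hdisj0 j' v hvi hvj
      | succ i' =>
        induction j using Fin.cases with
        | zero =>
          simp only [Fin.cases_zero, Fin.cases_succ, SimpleGraph.Walk.support_copy] at hvi hvj
          exact hdisj0 i' v hvj hvi
        | succ j' =>
          have hij' : i' ≠ j' := fun h => hij (by rw [h])
          simp only [Fin.cases_succ, SimpleGraph.Walk.support_copy] at hvi hvj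
          rw [hliftedSupp] at hvi hvj
          rcases hvi with rfl | hvi | rfl
          · rcases hvj with h | hvj | h
            · exact hScol i' j' hij' (Prod.ext_iff.mp h).2
            · exact hrowAny j' _ hvj
            · exact hSTv i' j' h
          · rcases hvj with rfl | hvj | rfl
            · exact hrowAny i' _ hvi
            · exact hqdisj i' j' hij' v hvi hvj
            · exact hrowAny i' _ hvi
          · rcases hvj with h | hvj | h
            · exact hSTv j' i' h.symm
            · exact hrowAny j' _ hvj
            · exact hTcol i' j' hij' (Prod.ext_iff.mp h).2
    · intro i v hv
      induction i using Fin.cases with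
      | zero =>
        simp only [Fin.cases_zero, SimpleGraph.Walk.support_copy] at hv
        have := (hsupp₀ v hv).1
        rw [this, hrfv]
      | succ j =>
        simp only [Fin.cases_succ, SimpleGraph.Walk.support_copy] at hv
        rw [hliftedSupp] at hv
        rcases hv with rfl | hv | rfl
        · simp [hrfv]
        · have := hqrow j v hv; omega
        · simp [hrfv]

/-- Let `z > 1`, let `Q` be the `z × z` grid graph and `U` its top row
(the vertices whose first coordinate is `0`). For every partition `(X',Y')` of `U` into two
disjoint subsets there is a set of `min(|X'|,|Y'|)` pairwise vertex-disjoint paths in `Q`,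
each connecting a vertex of `X'` to a vertex of `Y'` (all endpoints being distinct). -/
theorem stmt_6 (z : ℕ) (hz : 1 < z) (X' Y' : Finset (Fin z × Fin z))
    (hdisj : Disjoint X' Y')
    (hunion : X' ∪ Y' = Finset.univ.filter fun v : Fin z × Fin z => (v.1 : ℕ) = 0) :
    ∃ (s t : Fin (min X'.card Y'.card) → Fin z × Fin z)
      (p : ∀ i, (gridGraph z).Walk (s i) (t i)),
      (∀ i, s i ∈ X') ∧ (∀ i, t i ∈ Y') ∧ (∀ i, (p i).IsPath) ∧
      (∀ i j, i ≠ j → ∀ v ∈ (p i).support, v ∉ (p j).support) := by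

  classical
  set m := min X'.card Y'.card with hm
  have hmem0 : ∀ v ∈ X' ∪ Y', (v.1 : ℕ) = 0 := by
    intro v hv; rw [hunion] at hv; exact (Finset.mem_filter.mp hv).2
  set X : Finset (Fin z) := X'.image Prod.snd with hXdef
  set Y : Finset (Fin z) := Y'.image Prod.snd with hYdef
  have hinjX : Set.InjOn (Prod.snd : Fin z × Fin z → Fin z) ↑X' := by
    intro a ha b hb h
    have ha0 := hmem0 a (Finset.mem_union_left _ ha)
    have hb0 := hmem0 b (Finset.mem_union_left _ hb)
    exact Prod.ext (Fin.ext (by omega)) h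
  have hinjY : Set.InjOn (Prod.snd : Fin z × Fin z → Fin z) ↑Y' := by
    intro a ha b hb h
    have ha0 := hmem0 a (Finset.mem_union_right _ ha)
    have hb0 := hmem0 b (Finset.mem_union_right _ hb)
    exact Prod.ext (Fin.ext (by omega)) h
  have hcX : X.card = X'.card := Finset.card_image_of_injOn hinjX
  have hcY : Y.card = Y'.card := Finset.card_image_of_injOn hinjY
  have hdisjXY : Disjoint X Y := by
    rw [Finset.disjoint_left]
    intro a haX haY
    obtain ⟨u, hu, hu2⟩ := Finset.mem_image.mp haX
    obtain ⟨w, hw, hw2⟩ := Finset.mem_image.mp haY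
    have hu0 := hmem0 u (Finset.mem_union_left _ hu)
    have hw0 := hmem0 w (Finset.mem_union_right _ hw)
    have huw : u = w := Prod.ext (Fin.ext (by omega)) (hu2.trans hw2.symm)
    exact Finset.disjoint_left.mp hdisj hu (huw ▸ hw)
  have hmz : 0 + m ≤ z := by
    have h1 : X.card ≤ z := by
      have := Finset.card_le_univ X
      simpa using this
    omega
  obtain ⟨s, t, p, hs, ht, hpath, hpdisj, _⟩ :=
    key z m 0 X Y hmz hdisjXY (by omega) (by omega)
  refine ⟨s, t, p, ?_, ?_, hpath, hpdisj⟩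
  · intro i
    obtain ⟨h0, hmem⟩ := hs i
    obtain ⟨u, hu, hu2⟩ := Finset.mem_image.mp hmem
    have hu0 := hmem0 u (Finset.mem_union_left _ hu)
    have : u = s i := Prod.ext (Fin.ext (by omega)) hu2
    exact this ▸ hu
  · intro i
    obtain ⟨h0, hmem⟩ := ht i
    obtain ⟨u, hu, hu2⟩ := Finset.mem_image.mp hmem
    have hu0 := hmem0 u (Finset.mem_union_right _ hu)
    have : u = t i := Prod.ext (Fin.ext (by omega)) hu2
    exact this ▸ hu
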